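/- Let m, k ∈ ℕ and let N ≥ 3 be an integer with N − 2m − 2 > 0; set λ = (N − 2m − 2)/2. Fix y ∈ ℝ^N with ‖y‖ = 1. Then for all x ∈ ℝ^N∖{0}, Δ_x^m [ ‖x‖^{k+2m} · C^λ_{k+2m}(w) ] = (−1)^m · 4^m · (Γ(λ+m)/Γ(λ)) · Γ(m+1) · ‖x‖^k · C^{λ+m}_k(w), where Δ_x^m is the m-fold iterated Laplacian in x. -/

import Mathlib

open scoped RealInnerProductSpace

/-- The Gegenbauer polynomial `C_k^λ(z)` given by its explicit sum. -/
noncomputable def gegenbauer (k : ℕ) (l : ℝ) (z : ℝ) : ℝ :=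
  ∑ j ∈ Finset.range (k / 2 + 1),
    (-1 : ℝ) ^ j * (Real.Gamma ((k : ℝ) - j + l) /
      (Real.Gamma l * (Nat.factorial j) * (Nat.factorial (k - 2 * j)))) * (2 * z) ^ (k - 2 * j)

/-- The Euclidean Laplacian: the sum of the second partial derivatives. -/
noncomputable def lap {N : ℕ} (f : EuclideanSpace ℝ (Fin N) → ℝ)
    (x : EuclideanSpace ℝ (Fin N)) : ℝ :=
  ∑ i : Fin N, fderiv ℝ (fun z => fderiv ℝ f z (EuclideanSpace.single i 1)) x
    (EuclideanSpace.single i 1)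

/-- `Δ_x` acting on a function of two variables. -/
noncomputable def lapX {N : ℕ}
    (F : EuclideanSpace ℝ (Fin N) → EuclideanSpace ℝ (Fin N) → ℝ) :
    EuclideanSpace ℝ (Fin N) → EuclideanSpace ℝ (Fin N) → ℝ :=
  fun x y => lap (fun x' => F x' y) x

/-- `Δ_y` acting on a function of two variables. -/
noncomputable def lapY {N : ℕ}
    (F : EuclideanSpace ℝ (Fin N) → EuclideanSpace ℝ (Fin N) → ℝ) :
    EuclideanSpace ℝ (Fin N) → EuclideanSpace ℝ (Fin N) → ℝ :=
  fun x y => lap (F x) y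

variable {N : ℕ}
local notation "E" => EuclideanSpace ℝ (Fin N)

lemma hasFDerivAt_pow'' {f : E → ℝ} {f' : (E) →L[ℝ] ℝ} {x : E}
    (h : HasFDerivAt f f' x) (n : ℕ) :
    HasFDerivAt (fun z => f z ^ n) (((n : ℝ) * f x ^ (n - 1)) • f') x := by
  induction n with
  | zero => simpa using hasFDerivAt_const (1:ℝ) x
  | succ n ih =>
    have h2 : HasFDerivAt (fun z => f z ^ n * f z) _ x := ih.mul h
    have he : (fun z => f z ^ n * f z) = fun z => f z ^ (n+1) := by
      funext z; rw [← pow_succ]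
    rw [he] at h2
    refine h2.congr_fderiv ?_
    rw [smul_smul, ← add_smul]
    congr 1
    rcases Nat.eq_zero_or_pos n with h0 | h0
    · subst h0; simp
    · have hfx : f x * f x ^ (n-1) = f x ^ n := by
        rw [← pow_succ']; congr 1; omega
      push_cast [Nat.add_sub_cancel]
      rw [mul_left_comm, hfx]; ring

lemma hasFDerivAt_t (v x : E) :
    HasFDerivAt (fun z : E => ⟪z, v⟫) (innerSL ℝ v) x := by
  have h : (fun z : E => ⟪z, v⟫) = ⇑(innerSL ℝ v) := by
    funext z; rw [innerSL_apply_apply, real_inner_comm]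
  rw [h]; exact (innerSL ℝ v).hasFDerivAt

lemma hasFDerivAt_s (x : E) :
    HasFDerivAt (fun z : E => ⟪z, z⟫) ((2:ℝ) • innerSL ℝ x) x := by
  have h := (hasFDerivAt_id x).inner ℝ (hasFDerivAt_id x)
  refine h.congr_fderiv ?_
  ext v
  rw [ContinuousLinearMap.smul_apply, innerSL_apply_apply]
  simp only [ContinuousLinearMap.comp_apply, ContinuousLinearMap.prod_apply,
    ContinuousLinearMap.coe_id', id_eq, fderivInnerCLM_apply]
  rw [real_inner_comm v x, smul_eq_mul]
  ring

noncomputable def Dc (y : E) (p q : ℕ) (x : E) : (E) →L[ℝ] ℝ :=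
  ((p:ℝ) * ⟪x,y⟫^(p-1) * ⟪x,x⟫^q) • innerSL ℝ y +
  (2*(q:ℝ)*⟪x,y⟫^p*⟪x,x⟫^(q-1)) • innerSL ℝ x

lemma hPp (y : E) (p q : ℕ) (x : E) :
    HasFDerivAt (fun z : E => ⟪z,y⟫^p * ⟪z,z⟫^q) (Dc y p q x) x := by
  have h := (hasFDerivAt_pow'' (hasFDerivAt_t y x) p).mul (hasFDerivAt_pow'' (hasFDerivAt_s x) q)
  refine h.congr_fderiv ?_
  ext w
  simp only [Dc, ContinuousLinearMap.add_apply, ContinuousLinearMap.smul_apply,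
    innerSL_apply_apply, smul_eq_mul, ContinuousLinearMap.coe_smul', Pi.smul_apply]
  ring

noncomputable def Dt (y v : E) (p q : ℕ) (x : E) : (E) →L[ℝ] ℝ :=
  (⟪x,v⟫ * ((p:ℝ) * ⟪x,y⟫^(p-1) * ⟪x,x⟫^q)) • innerSL ℝ y
  + (⟪x,v⟫ * (2*(q:ℝ)*⟪x,y⟫^p*⟪x,x⟫^(q-1))) • innerSL ℝ x
  + (⟪x,y⟫^p * ⟪x,x⟫^q) • innerSL ℝ v

lemma hTSU (y v : E) (p q : ℕ) (x : E) :
    HasFDerivAt (fun z : E => ⟪z,y⟫^p * ⟪z,z⟫^q * ⟪z,v⟫) (Dt y v p q x) x := by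
  have h := (hPp y p q x).mul (hasFDerivAt_t v x)
  refine h.congr_fderiv ?_
  ext w
  simp only [Dt, Dc, ContinuousLinearMap.add_apply, ContinuousLinearMap.smul_apply,
    innerSL_apply_apply, smul_eq_mul, ContinuousLinearMap.coe_smul', Pi.smul_apply]
  ring

lemma hDcApply (y w : E) (p q : ℕ) (x : E) :
    HasFDerivAt (fun z : E => Dc y p q z w)
      ((⟪y,w⟫ * (p:ℝ)) • Dc y (p-1) q x + (2*(q:ℝ)) • Dt y w p (q-1) x) x := by
  have hfun : (fun z : E => Dc y p q z w)
      = fun z : E => (⟪y,w⟫ * (p:ℝ)) * (⟪z,y⟫^(p-1) * ⟪z,z⟫^q)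
        + (2*(q:ℝ)) * (⟪z,y⟫^p * ⟪z,z⟫^(q-1) * ⟪z,w⟫) := by
    funext z
    simp only [Dc, ContinuousLinearMap.add_apply, ContinuousLinearMap.smul_apply,
      innerSL_apply_apply, smul_eq_mul]
    ring
  rw [hfun]
  exact ((hPp y (p-1) q x).const_mul _).add ((hTSU y w p (q-1) x).const_mul _)

lemma key (y : E) (hy : ‖y‖ = 1) (p q : ℕ) (x : E) :
    ∑ i : Fin N, ((⟪y, EuclideanSpace.single i (1:ℝ)⟫ * (p:ℝ)) • Dc y (p-1) q x
        + (2*(q:ℝ)) • Dt y (EuclideanSpace.single i 1) p (q-1) x) (EuclideanSpace.single i 1)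
    = ((p:ℝ)*((p:ℝ)-1)) * ⟪x,y⟫^(p-2) * ⟪x,x⟫^q
      + (2*(q:ℝ)*(2*(q:ℝ)+(N:ℝ)-2)+4*(p:ℝ)*(q:ℝ)) * ⟪x,y⟫^p * ⟪x,x⟫^(q-1) := by
  have hyy : ⟪y,y⟫ = (1:ℝ) := by rw [real_inner_self_eq_norm_sq, hy]; norm_num
  have hsum : ∀ v w : E, ∑ i : Fin N, v i * w i = ⟪v,w⟫ := by
    intro v w; simp [PiLp.inner_apply, mul_comm]
  have expand : ∀ i : Fin N,
      ((⟪y, EuclideanSpace.single i (1:ℝ)⟫ * (p:ℝ)) • Dc y (p-1) q x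
        + (2*(q:ℝ)) • Dt y (EuclideanSpace.single i 1) p (q-1) x) (EuclideanSpace.single i 1)
      = ((p:ℝ)*((p-1:ℕ):ℝ)*⟪x,y⟫^(p-2)*⟪x,x⟫^q) * (y i * y i)
        + ((2*(p:ℝ)*(q:ℝ) + 2*(q:ℝ)*(p:ℝ))*⟪x,y⟫^(p-1)*⟪x,x⟫^(q-1)) * (x i * y i)
        + (4*(q:ℝ)*((q-1:ℕ):ℝ)*⟪x,y⟫^p*⟪x,x⟫^(q-2)) * (x i * x i)
        + (2*(q:ℝ)*⟪x,y⟫^p*⟪x,x⟫^(q-1)) := by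
    intro i
    simp only [Dc, Dt, ContinuousLinearMap.add_apply, ContinuousLinearMap.smul_apply,
      innerSL_apply_apply, smul_eq_mul, EuclideanSpace.inner_single_right, starRingEnd_apply,
      star_trivial, one_mul, EuclideanSpace.inner_single_left, EuclideanSpace.single_apply,
      if_pos rfl, Nat.sub_sub]
    norm_num
    ring
  rw [Finset.sum_congr rfl (fun i _ => expand i)]
  simp only [Finset.sum_add_distrib, ← Finset.mul_sum, Finset.sum_const, Finset.card_univ,
    Fintype.card_fin, nsmul_eq_mul]
  rw [hsum y y, hsum x y, hsum x x, hyy]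
  rcases p with _ | _ | p <;> rcases q with _ | _ | q <;>
    simp only [Nat.add_sub_cancel, Nat.sub_self, Nat.zero_sub, Nat.sub_zero, Nat.cast_zero,
      Nat.cast_one, Nat.cast_add, Nat.cast_ofNat, pow_zero] <;> push_cast <;> ring


lemma lap_sum (y : E) (hy : ‖y‖ = 1) (u : Finset ℕ) (c : ℕ → ℝ) (pf qf : ℕ → ℕ) (x : E) :
    lap (fun z : E => ∑ j ∈ u, c j * (⟪z,y⟫ ^ pf j * ⟪z,z⟫ ^ qf j)) x
    = ∑ j ∈ u, c j * ( ((pf j:ℝ)*((pf j:ℝ)-1)) * ⟪x,y⟫^(pf j-2) * ⟪x,x⟫^(qf j)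
        + (2*(qf j:ℝ)*(2*(qf j:ℝ)+(N:ℝ)-2)+4*(pf j:ℝ)*(qf j:ℝ))
            * ⟪x,y⟫^(pf j) * ⟪x,x⟫^(qf j - 1) ) := by
  have hG : ∀ z : E, HasFDerivAt (fun z : E => ∑ j ∈ u, c j * (⟪z,y⟫ ^ pf j * ⟪z,z⟫ ^ qf j))
      (∑ j ∈ u, c j • Dc y (pf j) (qf j) z) z := fun z =>
    HasFDerivAt.fun_sum (fun j _ => (hPp y (pf j) (qf j) z).const_mul (c j))
  unfold lap
  calc
    ∑ i : Fin N, fderiv ℝ (fun z => fderiv ℝ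
          (fun z : E => ∑ j ∈ u, c j * (⟪z,y⟫ ^ pf j * ⟪z,z⟫ ^ qf j)) z
          (EuclideanSpace.single i 1)) x (EuclideanSpace.single i 1)
      = ∑ i : Fin N, ∑ j ∈ u, c j *
          (((⟪y, EuclideanSpace.single i (1:ℝ)⟫ * (pf j:ℝ)) • Dc y (pf j-1) (qf j) x
            + (2*(qf j:ℝ)) • Dt y (EuclideanSpace.single i 1) (pf j) (qf j-1) x)
            (EuclideanSpace.single i 1)) := by
        refine Finset.sum_congr rfl fun i _ => ?_
        rw [show (fun z => fderiv ℝ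
              (fun z : E => ∑ j ∈ u, c j * (⟪z,y⟫ ^ pf j * ⟪z,z⟫ ^ qf j)) z
              (EuclideanSpace.single i 1))
            = fun z : E => ∑ j ∈ u, c j * (Dc y (pf j) (qf j) z (EuclideanSpace.single i 1))
          from funext fun z => by
            rw [(hG z).fderiv]; simp [ContinuousLinearMap.sum_apply]]
        rw [(HasFDerivAt.fun_sum fun j _ =>
          ((hDcApply y (EuclideanSpace.single i 1) (pf j) (qf j) x).const_mul (c j))).fderiv]
        simp only [ContinuousLinearMap.sum_apply, ContinuousLinearMap.smul_apply,
          ContinuousLinearMap.add_apply, smul_eq_mul]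
    _ = ∑ j ∈ u, c j * ∑ i : Fin N,
          (((⟪y, EuclideanSpace.single i (1:ℝ)⟫ * (pf j:ℝ)) • Dc y (pf j-1) (qf j) x
            + (2*(qf j:ℝ)) • Dt y (EuclideanSpace.single i 1) (pf j) (qf j-1) x)
            (EuclideanSpace.single i 1)) := by
        rw [Finset.sum_comm]
        exact Finset.sum_congr rfl fun j _ => (Finset.mul_sum _ _ _).symm
    _ = _ := Finset.sum_congr rfl fun j _ => by rw [key y hy]

noncomputable def gc (n : ℕ) (μ : ℝ) (j : ℕ) : ℝ :=
  (-1:ℝ)^j * (Real.Gamma ((n:ℝ) - j + μ) /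
    (Real.Gamma μ * (Nat.factorial j) * (Nat.factorial (n - 2*j)))) * 2^(n - 2*j)

lemma gc_core (n j : ℕ) (μ : ℝ) (hμ : 0 < μ) (i : ℕ) {N : ℕ}
    (hN : (N:ℝ) = 2*μ+2*(i:ℝ)+2) (hj : 2*j+2 ≤ n) :
    gc n μ j * ((↑(n-2*j):ℝ) * ((↑(n-2*j):ℝ)-1))
    + gc n μ (j+1) * (2*((j+1:ℕ):ℝ)*(2*((j+1:ℕ):ℝ)+(N:ℝ)-2)+4*((n-2*(j+1):ℕ):ℝ)*((j+1:ℕ):ℝ))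
    = -4*μ*(i:ℝ) * gc (n-2) (μ+1) j := by
  obtain ⟨d, rfl⟩ : ∃ d, n = 2*j+2+d := ⟨n-(2*j+2), by omega⟩
  have e1 : 2*j+2+d - 2*j = d+2 := by omega
  have e2 : 2*j+2+d - 2*(j+1) = d := by omega
  have e3 : 2*j+2+d - 2 = 2*j+d := by omega
  have e4 : 2*j+d - 2*j = d := by omega
  unfold gc
  rw [e1, e2, e3, e4]
  set α : ℝ := (j:ℝ) + 1 + (d:ℝ) + μ with hα
  have hαpos : 0 < α := by have : (0:ℝ) ≤ (j:ℝ) := Nat.cast_nonneg j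
                           have : (0:ℝ) ≤ (d:ℝ) := Nat.cast_nonneg d
                           positivity
  have g1 : ((2*j+2+d:ℕ):ℝ) - (j:ℕ) + μ = α + 1 := by push_cast; ring
  have g2 : ((2*j+2+d:ℕ):ℝ) - ((j+1:ℕ):ℝ) + μ = α := by push_cast; ring
  have g3 : ((2*j+d:ℕ):ℝ) - (j:ℕ) + (μ+1) = α := by push_cast; ring
  rw [g1, g2, g3, Real.Gamma_add_one hαpos.ne', Real.Gamma_add_one hμ.ne']
  have f1 : (Nat.factorial (d+2) : ℝ) = ((d:ℝ)+2)*((d:ℝ)+1)*(Nat.factorial d : ℝ) := by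
    rw [Nat.factorial_succ, Nat.factorial_succ]; push_cast; ring
  have f2 : (Nat.factorial (j+1) : ℝ) = ((j:ℝ)+1)*(Nat.factorial j : ℝ) := by
    rw [Nat.factorial_succ]; push_cast; ring
  rw [f1, f2, hN]
  have hΓμ : Real.Gamma μ ≠ 0 := (Real.Gamma_pos_of_pos hμ).ne'
  have hfj : (Nat.factorial j : ℝ) ≠ 0 := Nat.cast_ne_zero.mpr (Nat.factorial_ne_zero j)
  have hfd : (Nat.factorial d : ℝ) ≠ 0 := Nat.cast_ne_zero.mpr (Nat.factorial_ne_zero d)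
  have hd2 : ((d:ℝ)+2)*((d:ℝ)+1) ≠ 0 := by positivity
  have hj1 : ((j:ℝ)+1) ≠ 0 := by positivity
  have hc : ((2*j+2+d:ℕ):ℝ) = 2*(j:ℝ)+2+(d:ℝ) := by push_cast; ring
  have hc2 : ((j+1:ℕ):ℝ) = (j:ℝ)+1 := by push_cast; ring
  have hc3 : ((d:ℕ):ℝ) = (d:ℝ) := rfl
  push_cast
  field_simp
  ring

lemma lap_GG (y : E) (hy : ‖y‖ = 1) (n : ℕ) (hn2 : 2 ≤ n) (μ : ℝ) (hμ : 0 < μ)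
    (i : ℕ) (hNrel : (N:ℝ) = 2*μ+2*(i:ℝ)+2) (c₀ : ℝ) (x : E) :
    lap (fun z : E => ∑ j ∈ Finset.range (n/2+1),
        (c₀ * gc n μ j) * (⟪z,y⟫^(n-2*j) * ⟪z,z⟫^j)) x
    = ∑ j ∈ Finset.range ((n-2)/2+1),
        ((-4*μ*(i:ℝ)*c₀) * gc (n-2) (μ+1) j) * (⟪x,y⟫^(n-2-2*j) * ⟪x,x⟫^j) := by
  rw [lap_sum y hy _ _ (fun j => n - 2*j) (fun j => j) x]
  set T := ⟪x,y⟫ with hT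
  set S := ⟪x,x⟫ with hS
  have split : ∀ j : ℕ, (c₀ * gc n μ j) *
      ( ((↑(n-2*j):ℝ)*((↑(n-2*j):ℝ)-1)) * T^(n-2*j-2) * S^j
        + (2*(j:ℝ)*(2*(j:ℝ)+(N:ℝ)-2)+4*(↑(n-2*j):ℝ)*(j:ℝ)) * T^(n-2*j) * S^(j-1) )
      = (c₀ * gc n μ j) * (((↑(n-2*j):ℝ)*((↑(n-2*j):ℝ)-1)) * T^(n-2*j-2) * S^j)
        + (c₀ * gc n μ j) * ((2*(j:ℝ)*(2*(j:ℝ)+(N:ℝ)-2)+4*(↑(n-2*j):ℝ)*(j:ℝ))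
            * T^(n-2*j) * S^(j-1)) :=
    fun j => by ring
  rw [Finset.sum_congr rfl (fun j _ => split j), Finset.sum_add_distrib]
  rw [Finset.sum_range_succ]
  have hlast : (↑(n-2*(n/2)):ℝ)*((↑(n-2*(n/2)):ℝ)-1) = 0 := by
    have h01 : n - 2*(n/2) = 0 ∨ n - 2*(n/2) = 1 := by omega
    rcases h01 with h | h <;> rw [h] <;> norm_num
  rw [hlast]
  rw [Finset.sum_range_succ']
  norm_num
  have hrange : (n-2)/2 + 1 = n/2 := by omega
  rw [hrange]
  rw [← Finset.sum_add_distrib, ← Finset.sum_neg_distrib]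
  refine Finset.sum_congr rfl fun j hj => ?_
  have hjn : 2*j+2 ≤ n := by
    have := Finset.mem_range.mp hj; omega
  have hexp1 : n - 2*j - 2 = n-2-2*j := by omega
  have hexp2 : n - 2*(j+1) = n-2-2*j := by omega
  have hcore := gc_core n j μ hμ i hNrel hjn
  push_cast at hcore
  rw [hexp2] at hcore
  rw [hexp1, hexp2]
  linear_combination (c₀ * T^(n-2-2*j) * S^j) * hcore

lemma f_eq (y : E) (hy : ‖y‖ = 1) (n : ℕ) (μ : ℝ) (x : E) :
    ‖x‖^n * gegenbauer n μ (⟪x,y⟫/(‖x‖*‖y‖))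
    = ∑ j ∈ Finset.range (n/2+1), gc n μ j * (⟪x,y⟫^(n-2*j) * ⟪x,x⟫^j) := by
  rcases eq_or_ne x 0 with rfl | hx
  · cases n with
    | zero => simp [gegenbauer, gc]
    | succ n =>
      have h0 : ⟪(0:E), y⟫ = (0:ℝ) := inner_zero_left y
      rw [h0]
      have hL : ‖(0:E)‖ ^ (n+1) = 0 := by simp
      rw [hL, zero_mul]
      symm
      refine Finset.sum_eq_zero fun j hj => ?_
      have hjr := Finset.mem_range.mp hj
      have h01 : 1 ≤ n+1-2*j ∨ (n+1-2*j = 0 ∧ 1 ≤ j) := by omega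
      have h00 : ⟪(0:E), (0:E)⟫ = (0:ℝ) := inner_zero_left 0
      rw [h00]
      rcases h01 with h | ⟨h1, h2⟩
      · rw [zero_pow (by omega : n+1-2*j ≠ 0)]; ring
      · rw [zero_pow (by omega : j ≠ 0)]; ring
  · have hx' : ‖x‖ ≠ 0 := norm_ne_zero_iff.mpr hx
    rw [hy, mul_one, gegenbauer, Finset.mul_sum]
    refine Finset.sum_congr rfl fun j hj => ?_
    have hj2 : 2*j ≤ n := by have := Finset.mem_range.mp hj; omega
    have hS : ⟪x,x⟫ = ‖x‖^2 := real_inner_self_eq_norm_sq x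
    have key : ‖x‖^n * (2 * (⟪x,y⟫/‖x‖))^(n-2*j) = 2^(n-2*j) * (⟪x,y⟫^(n-2*j) * ⟪x,x⟫^j) := by
      rw [hS, ← pow_mul,
        show (2*(⟪x,y⟫/‖x‖)) = (2*⟪x,y⟫)/‖x‖ from by ring, div_pow, mul_pow]
      rw [show n = (n-2*j) + 2*j from by omega, pow_add]
      have h2j : (n-2*j)+2*j - 2*j = n - 2*j := by omega
      rw [h2j]
      field_simp
    unfold gc
    linear_combination ((-1:ℝ)^j * (Real.Gamma ((n:ℝ)-j+μ) /
      (Real.Gamma μ * (Nat.factorial j) * (Nat.factorial (n-2*j))))) * key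

noncomputable def Kc (l : ℝ) (m : ℕ) : ℕ → ℝ
  | 0 => 1
  | a+1 => (-4*(l+(a:ℝ))*((m:ℝ)-(a:ℝ))) * Kc l m a

lemma Kc_eq (l : ℝ) (hl : 0 < l) (m : ℕ) : ∀ a, a ≤ m →
    Kc l m a = (-1:ℝ)^a * 4^a * (Real.Gamma (l+a)/Real.Gamma l)
      * ((Nat.factorial m : ℝ) / (Nat.factorial (m-a) : ℝ)) := by
  intro a
  induction a with
  | zero =>
    intro _
    have h1 : Real.Gamma l ≠ 0 := (Real.Gamma_pos_of_pos hl).ne'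
    have h2 : (Nat.factorial m : ℝ) ≠ 0 := Nat.cast_ne_zero.mpr (Nat.factorial_ne_zero m)
    simp [Kc]
    field_simp
  | succ a ih =>
    intro ha
    have ha' : a ≤ m := by omega
    have hrec := ih ha'
    have hΓ : Real.Gamma (l+(a+1:ℕ)) = (l+a) * Real.Gamma (l+a) := by
      have : l + ((a:ℝ)+1) = (l+a) + 1 := by ring
      push_cast
      rw [this, Real.Gamma_add_one (by positivity)]
    have hfact : (Nat.factorial (m-a) : ℝ) = ((m:ℝ)-(a:ℝ)) * (Nat.factorial (m-(a+1)) : ℝ) := by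
      have h1 : m - a = (m-(a+1)) + 1 := by omega
      rw [h1, Nat.factorial_succ]
      push_cast
      have : ((m-(a+1):ℕ):ℝ) = (m:ℝ)-(a:ℝ)-1 := by
        have : (a+1:ℕ) ≤ m := ha
        push_cast [Nat.cast_sub this]
        ring
      rw [this]
      ring
    rw [Kc, hrec, hΓ, hfact]
    have hΓl : Real.Gamma l ≠ 0 := (Real.Gamma_pos_of_pos hl).ne'
    have hf2 : (Nat.factorial (m-(a+1)) : ℝ) ≠ 0 := Nat.cast_ne_zero.mpr (Nat.factorial_ne_zero _)
    have hma : ((m:ℝ)-(a:ℝ)) ≠ 0 := by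
      have : (a:ℝ) + 1 ≤ (m:ℝ) := by exact_mod_cast ha
      linarith
    push_cast
    field_simp
    ring

/-- for `‖y‖ = 1`,
`Δ_x^m [‖x‖^{k+2m} C^λ_{k+2m}(w)] = (-1)^m 4^m (Γ(λ+m)/Γ(λ)) Γ(m+1) ‖x‖^k C^{λ+m}_k(w)`. -/
theorem stmt9 (m k : ℕ) (N : ℕ) (hN : 3 ≤ N) (hNm : 0 < (N : ℤ) - 2 * m - 2)
    (l : ℝ) (hl : l = ((N : ℝ) - 2 * m - 2) / 2)
    (y : EuclideanSpace ℝ (Fin N)) (hy : ‖y‖ = 1)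
    (f : EuclideanSpace ℝ (Fin N) → ℝ)
    (hf : ∀ x, f x = ‖x‖ ^ (k + 2 * m) * gegenbauer (k + 2 * m) l (⟪x, y⟫ / (‖x‖ * ‖y‖)))
    (x : EuclideanSpace ℝ (Fin N)) (hx : x ≠ 0) :
    (lap)^[m] f x =
      (-1 : ℝ) ^ m * 4 ^ m * (Real.Gamma (l + m) / Real.Gamma l) * Real.Gamma (m + 1) *
        ‖x‖ ^ k * gegenbauer k (l + m) (⟪x, y⟫ / (‖x‖ * ‖y‖)) := by
  have hNm' : 2*m+2 < N := by omega
  have hl0 : 0 < l := by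
    rw [hl]
    have h1 : ((2*m+2 : ℕ) : ℝ) < (N : ℝ) := by exact_mod_cast hNm'
    push_cast at h1
    linarith
  have claim : ∀ a, a ≤ m → (lap)^[a] f = fun z : EuclideanSpace ℝ (Fin N) =>
      ∑ j ∈ Finset.range ((k+2*(m-a))/2+1),
        (Kc l m a * gc (k+2*(m-a)) (l+(a:ℝ)) j) * (⟪z,y⟫^(k+2*(m-a)-2*j) * ⟪z,z⟫^j) := by
    intro a
    induction a with
    | zero =>
      intro _
      funext z
      simp only [Function.iterate_zero, id_eq, Nat.sub_zero, Kc, one_mul, Nat.cast_zero,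
        add_zero]
      rw [hf z, f_eq y hy (k+2*m) l z]
    | succ a ih =>
      intro ha
      have ha' : a ≤ m := by omega
      rw [Function.iterate_succ_apply', ih ha']
      funext z
      have hn2 : 2 ≤ k + 2*(m-a) := by omega
      have hμ : 0 < l + (a:ℝ) := by positivity
      have hNrel : (N:ℝ) = 2*(l+(a:ℝ)) + 2*((m-a:ℕ):ℝ) + 2 := by
        rw [hl, Nat.cast_sub ha']; push_cast; ring
      rw [lap_GG y hy (k+2*(m-a)) hn2 (l+(a:ℝ)) hμ (m-a) hNrel (Kc l m a) z]
      have e1 : k+2*(m-a)-2 = k+2*(m-(a+1)) := by omega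
      have e2 : l+(a:ℝ)+1 = l+((a+1:ℕ):ℝ) := by push_cast; ring
      have e3 : -4*(l+(a:ℝ))*((m-a:ℕ):ℝ) * Kc l m a = Kc l m (a+1) := by
        rw [Kc, Nat.cast_sub ha']
      rw [e1, e2, e3]
  have hm := claim m le_rfl
  rw [hm]
  simp only [Nat.sub_self, Nat.mul_zero, mul_zero, add_zero]
  have hpull : (∑ j ∈ Finset.range (k/2+1),
        (Kc l m m * gc k (l+(m:ℝ)) j) * (⟪x,y⟫^(k-2*j) * ⟪x,x⟫^j))
      = Kc l m m * ∑ j ∈ Finset.range (k/2+1),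
        gc k (l+(m:ℝ)) j * (⟪x,y⟫^(k-2*j) * ⟪x,x⟫^j) := by
    rw [Finset.mul_sum]
    exact Finset.sum_congr rfl fun j _ => by ring
  rw [hpull, ← f_eq y hy k (l+(m:ℝ)) x]
  rw [Kc_eq l hl0 m m le_rfl]
  simp only [Nat.sub_self, Nat.factorial_zero, Nat.cast_one, div_one]
  rw [show ((m:ℝ)+1) = ((m:ℕ):ℝ)+1 from by push_cast; ring, Real.Gamma_nat_eq_factorial]
  ring
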